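/- Let A be a Boolean algebra carrying a finitely additive strictly positive measure μ : A → [0,1] (μ(0) = 0, μ(1) = 1, μ(a + b) = μ(a) + μ(b) for disjoint a, b, and μ(a) > 0 for a ≠ 0). If b is an element of a Boolean algebra extending A, then μ extends to a finitely additive strictly positive measure μ' on the subalgebra generated by A ∪ {b}, defined via μ'(a·εb) = ½(μ(a) + μ̃(a·εb) − μ̃(a·(−εb))) where μ̃(a·εb) = sup{μ(a') : a' ∈ A, a' ≤ a·εb}, for ε = ±1. -/
import Mathlib


/-- `sSupBelow A μ x` is `μ̃(x) = sup {μ(a') : a' ∈ A, a' ≤ x}`. -/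
noncomputable def sSupBelow {B : Type*} [BooleanAlgebra B] (A : Set B) (μ : B → ℝ)
    (x : B) : ℝ :=
  sSup (μ '' {a' | a' ∈ A ∧ a' ≤ x})

/-- The subalgebra generated by `A ∪ {b}`: elements of the form `a₀ + a₁·b + a₂·(−b)`. -/
def genSet {B : Type*} [BooleanAlgebra B] (A : Set B) (b : B) : Set B :=
  {x | ∃ a₀ ∈ A, ∃ a₁ ∈ A, ∃ a₂ ∈ A, x = a₀ ⊔ (a₁ ⊓ b) ⊔ (a₂ ⊓ bᶜ)}

namespace Stmt3Aux

variable {B : Type*} [BooleanAlgebra B] {A : Set B} {μ : B → ℝ}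

theorem s_nonempty (hbotA : ⊥ ∈ A) (x : B) : (μ '' {a' | a' ∈ A ∧ a' ≤ x}).Nonempty :=
  ⟨μ ⊥, ⟨⊥, ⟨hbotA, bot_le⟩, rfl⟩⟩

theorem s_bdd (hrange : ∀ x ∈ A, 0 ≤ μ x ∧ μ x ≤ 1) (x : B) :
    BddAbove (μ '' {a' | a' ∈ A ∧ a' ≤ x}) := by
  refine ⟨1, ?_⟩
  rintro r ⟨a, ⟨haA, _⟩, rfl⟩
  exact (hrange a haA).2

theorem le_s (hrange : ∀ x ∈ A, 0 ≤ μ x ∧ μ x ≤ 1) {a : B} (haA : a ∈ A) {x : B}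
    (hax : a ≤ x) : μ a ≤ sSupBelow A μ x :=
  le_csSup (s_bdd hrange x) ⟨a, ⟨haA, hax⟩, rfl⟩

theorem s_le (hbotA : ⊥ ∈ A) {x : B} {r : ℝ} (h : ∀ a ∈ A, a ≤ x → μ a ≤ r) :
    sSupBelow A μ x ≤ r := by
  refine csSup_le (s_nonempty hbotA x) ?_
  rintro t ⟨a, ⟨haA, hax⟩, rfl⟩
  exact h a haA hax

theorem s_nonneg (hbotA : ⊥ ∈ A) (hμbot : μ ⊥ = 0)
    (hrange : ∀ x ∈ A, 0 ≤ μ x ∧ μ x ≤ 1) (x : B) : 0 ≤ sSupBelow A μ x := by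
  have := le_s (μ := μ) hrange hbotA (bot_le : (⊥:B) ≤ x)
  rwa [hμbot] at this

theorem mono (hinfA : ∀ x ∈ A, ∀ y ∈ A, x ⊓ y ∈ A) (hcomplA : ∀ x ∈ A, xᶜ ∈ A)
    (hrange : ∀ x ∈ A, 0 ≤ μ x ∧ μ x ≤ 1)
    (hadd : ∀ x ∈ A, ∀ y ∈ A, x ⊓ y = ⊥ → μ (x ⊔ y) = μ x + μ y)
    {x y : B} (hx : x ∈ A) (hy : y ∈ A) (hxy : x ≤ y) : μ x ≤ μ y := by
  have hmem : y ⊓ xᶜ ∈ A := hinfA y hy _ (hcomplA x hx)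
  have h1 : x ⊓ (y ⊓ xᶜ) = ⊥ := by
    rw [inf_comm y, ← inf_assoc, inf_compl_self, bot_inf_eq]
  have h2 : x ⊔ y ⊓ xᶜ = y := by
    rw [sup_inf_left, sup_compl_eq_top, inf_top_eq, sup_eq_right.mpr hxy]
  have := hadd x hx _ hmem h1
  rw [h2] at this
  have := (hrange _ hmem).1
  linarith

/-- `s a = μ a` for `a ∈ A`. -/
theorem sA (hbotA : ⊥ ∈ A) (hinfA : ∀ x ∈ A, ∀ y ∈ A, x ⊓ y ∈ A)
    (hcomplA : ∀ x ∈ A, xᶜ ∈ A)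
    (hrange : ∀ x ∈ A, 0 ≤ μ x ∧ μ x ≤ 1)
    (hadd : ∀ x ∈ A, ∀ y ∈ A, x ⊓ y = ⊥ → μ (x ⊔ y) = μ x + μ y)
    {a : B} (ha : a ∈ A) : sSupBelow A μ a = μ a := by
  refine le_antisymm (s_le hbotA fun c hc hca => mono hinfA hcomplA hrange hadd hc ha hca)
    (le_s hrange ha le_rfl)

theorem s_bot (hbotA : ⊥ ∈ A) (hμbot : μ ⊥ = 0)
    (hrange : ∀ x ∈ A, 0 ≤ μ x ∧ μ x ≤ 1) : sSupBelow A μ (⊥ : B) = 0 := by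
  refine le_antisymm (s_le hbotA fun c hc hcb => ?_) (s_nonneg hbotA hμbot hrange ⊥)
  rw [le_bot_iff.mp hcb, hμbot]

theorem s_pos (hdense : ∀ c : B, c ≠ ⊥ → ∃ a ∈ A, a ≠ ⊥ ∧ a ≤ c)
    (hrange : ∀ x ∈ A, 0 ≤ μ x ∧ μ x ≤ 1)
    (hpos : ∀ x ∈ A, x ≠ ⊥ → 0 < μ x)
    {x : B} (hx : x ≠ ⊥) : 0 < sSupBelow A μ x := by
  obtain ⟨a, haA, hane, hax⟩ := hdense x hx
  exact lt_of_lt_of_le (hpos a haA hane) (le_s hrange haA hax)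

/-- superadditivity -/
theorem s_superadd (hbotA : ⊥ ∈ A) (hsupA : ∀ x ∈ A, ∀ y ∈ A, x ⊔ y ∈ A)
    (hrange : ∀ x ∈ A, 0 ≤ μ x ∧ μ x ≤ 1)
    (hadd : ∀ x ∈ A, ∀ y ∈ A, x ⊓ y = ⊥ → μ (x ⊔ y) = μ x + μ y)
    {x y : B} (hxy : x ⊓ y = ⊥) :
    sSupBelow A μ x + sSupBelow A μ y ≤ sSupBelow A μ (x ⊔ y) := by
  have h : sSupBelow A μ x ≤ sSupBelow A μ (x ⊔ y) - sSupBelow A μ y := by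
    refine s_le hbotA fun c₁ hc₁ hc₁x => ?_
    have h2 : sSupBelow A μ y ≤ sSupBelow A μ (x ⊔ y) - μ c₁ := by
      refine s_le hbotA fun c₂ hc₂ hc₂y => ?_
      have hd : c₁ ⊓ c₂ = ⊥ :=
        le_bot_iff.mp (le_trans (inf_le_inf hc₁x hc₂y) (le_of_eq hxy))
      have := hadd c₁ hc₁ c₂ hc₂ hd
      have hle : μ (c₁ ⊔ c₂) ≤ sSupBelow A μ (x ⊔ y) :=
        le_s hrange (hsupA c₁ hc₁ c₂ hc₂) (sup_le_sup hc₁x hc₂y)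
      linarith
    linarith
  linarith

end Stmt3Aux

namespace Stmt3Aux
variable {B : Type*} [BooleanAlgebra B] {A : Set B} {μ : B → ℝ}

/-- absorb a disjoint element of `A` -/
theorem s_addA (hbotA : ⊥ ∈ A) (hsupA : ∀ x ∈ A, ∀ y ∈ A, x ⊔ y ∈ A)
    (hinfA : ∀ x ∈ A, ∀ y ∈ A, x ⊓ y ∈ A) (hcomplA : ∀ x ∈ A, xᶜ ∈ A)
    (hrange : ∀ x ∈ A, 0 ≤ μ x ∧ μ x ≤ 1)
    (hadd : ∀ x ∈ A, ∀ y ∈ A, x ⊓ y = ⊥ → μ (x ⊔ y) = μ x + μ y)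
    {a : B} (ha : a ∈ A) {x : B} (hax : a ⊓ x = ⊥) :
    sSupBelow A μ (a ⊔ x) = μ a + sSupBelow A μ x := by
  refine le_antisymm (s_le hbotA fun c hc hcax => ?_) ?_
  · have hca : c ⊓ a ∈ A := hinfA c hc a ha
    have hcac : c ⊓ aᶜ ∈ A := hinfA c hc aᶜ (hcomplA a ha)
    have hsplit : c = c ⊓ a ⊔ c ⊓ aᶜ := by
      rw [← inf_sup_left, sup_compl_eq_top, inf_top_eq]
    have hdisj : (c ⊓ a) ⊓ (c ⊓ aᶜ) = ⊥ := by
      rw [inf_assoc, inf_comm a, inf_assoc, compl_inf_self, inf_bot_eq, inf_bot_eq]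
    have hμc : μ c = μ (c ⊓ a) + μ (c ⊓ aᶜ) := by
      rw [← hadd _ hca _ hcac hdisj, ← hsplit]
    have h1 : μ (c ⊓ a) ≤ μ a := mono hinfA hcomplA hrange hadd hca ha inf_le_right
    have h2 : c ⊓ aᶜ ≤ x := by
      calc c ⊓ aᶜ ≤ (a ⊔ x) ⊓ aᶜ := inf_le_inf_right _ hcax
        _ = a ⊓ aᶜ ⊔ x ⊓ aᶜ := by rw [inf_sup_right]
        _ ≤ x := by rw [inf_compl_self]; exact sup_le bot_le inf_le_left
    have h3 : μ (c ⊓ aᶜ) ≤ sSupBelow A μ x := le_s hrange hcac h2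
    linarith
  · have := s_superadd hbotA hsupA hrange hadd (x := a) (y := x) hax
    rwa [sA hbotA hinfA hcomplA hrange hadd ha] at this

theorem s_split (hbotA : ⊥ ∈ A) (hsupA : ∀ x ∈ A, ∀ y ∈ A, x ⊔ y ∈ A)
    (hinfA : ∀ x ∈ A, ∀ y ∈ A, x ⊓ y ∈ A) (hcomplA : ∀ x ∈ A, xᶜ ∈ A)
    (hrange : ∀ x ∈ A, 0 ≤ μ x ∧ μ x ≤ 1)
    (hadd : ∀ x ∈ A, ∀ y ∈ A, x ⊓ y = ⊥ → μ (x ⊔ y) = μ x + μ y)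
    {a₁ a₂ : B} (h₁ : a₁ ∈ A) (h₂ : a₂ ∈ A) (h12 : a₁ ⊓ a₂ = ⊥) (t u : B) :
    sSupBelow A μ (a₁ ⊓ t ⊔ a₂ ⊓ u) = sSupBelow A μ (a₁ ⊓ t) + sSupBelow A μ (a₂ ⊓ u) := by
  refine le_antisymm (s_le hbotA fun c hc hcle => ?_) ?_
  · have hca1 : c ⊓ a₁ ∈ A := hinfA c hc a₁ h₁
    have hca2 : c ⊓ a₂ ∈ A := hinfA c hc a₂ h₂
    have hc12 : c ≤ a₁ ⊔ a₂ :=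
      le_trans hcle (sup_le (le_sup_of_le_left inf_le_left) (le_sup_of_le_right inf_le_left))
    have hsplit : c = c ⊓ a₁ ⊔ c ⊓ a₂ := by
      rw [← inf_sup_left, inf_eq_left.mpr hc12]
    have hdisj : (c ⊓ a₁) ⊓ (c ⊓ a₂) = ⊥ := by
      refine le_bot_iff.mp ?_
      calc (c ⊓ a₁) ⊓ (c ⊓ a₂) ≤ a₁ ⊓ a₂ := inf_le_inf inf_le_right inf_le_right
        _ = ⊥ := h12
    have hμc : μ c = μ (c ⊓ a₁) + μ (c ⊓ a₂) := by
      rw [← hadd _ hca1 _ hca2 hdisj, ← hsplit]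
    have hle1 : c ⊓ a₁ ≤ a₁ ⊓ t := by
      calc c ⊓ a₁ ≤ (a₁ ⊓ t ⊔ a₂ ⊓ u) ⊓ a₁ := inf_le_inf_right _ hcle
        _ = a₁ ⊓ t ⊓ a₁ ⊔ a₂ ⊓ u ⊓ a₁ := by rw [inf_sup_right]
        _ ≤ a₁ ⊓ t ⊔ (a₁ ⊓ a₂) := by
            refine sup_le_sup (inf_le_left) ?_
            calc a₂ ⊓ u ⊓ a₁ ≤ a₂ ⊓ a₁ := inf_le_inf inf_le_left le_rfl
              _ = a₁ ⊓ a₂ := inf_comm _ _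
        _ = a₁ ⊓ t := by rw [h12, sup_bot_eq]
    have hle2 : c ⊓ a₂ ≤ a₂ ⊓ u := by
      calc c ⊓ a₂ ≤ (a₁ ⊓ t ⊔ a₂ ⊓ u) ⊓ a₂ := inf_le_inf_right _ hcle
        _ = a₁ ⊓ t ⊓ a₂ ⊔ a₂ ⊓ u ⊓ a₂ := by rw [inf_sup_right]
        _ ≤ (a₁ ⊓ a₂) ⊔ a₂ ⊓ u := by
            refine sup_le_sup ?_ inf_le_left
            exact inf_le_inf inf_le_left le_rfl
        _ = a₂ ⊓ u := by rw [h12, bot_sup_eq]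
    have := le_s hrange hca1 hle1
    have := le_s hrange hca2 hle2
    linarith
  · refine s_superadd hbotA hsupA hrange hadd (le_bot_iff.mp ?_)
    calc (a₁ ⊓ t) ⊓ (a₂ ⊓ u) ≤ a₁ ⊓ a₂ := inf_le_inf inf_le_left inf_le_left
      _ = ⊥ := h12

end Stmt3Aux

namespace Stmt3Aux
variable {B : Type*} [BooleanAlgebra B]

theorem split_b (a b : B) : a = a ⊓ b ⊔ a ⊓ bᶜ := by
  rw [← inf_sup_left, sup_compl_eq_top, inf_top_eq]

/-- normalization identity -/
theorem norm_rep (a₀ a₁ a₂ b : B) :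
    a₀ ⊔ a₁ ⊓ b ⊔ a₂ ⊓ bᶜ =
      (a₀ ⊔ a₁ ⊓ a₂) ⊔ (a₁ ⊓ (a₀ ⊔ a₁ ⊓ a₂)ᶜ) ⊓ b ⊔ (a₂ ⊓ (a₀ ⊔ a₁ ⊓ a₂)ᶜ) ⊓ bᶜ := by
  set d := a₀ ⊔ a₁ ⊓ a₂ with hd
  refine le_antisymm ?_ ?_
  · refine sup_le (sup_le ?_ ?_) ?_
    · exact le_sup_of_le_left (le_sup_of_le_left le_sup_left)
    · have h : a₁ ⊓ b = a₁ ⊓ b ⊓ d ⊔ a₁ ⊓ b ⊓ dᶜ := split_b _ _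
      rw [h]
      refine sup_le (le_sup_of_le_left (le_sup_of_le_left inf_le_right)) ?_
      refine le_sup_of_le_left (le_sup_of_le_right ?_)
      rw [inf_assoc, inf_comm b, ← inf_assoc, inf_assoc]
    · have h : a₂ ⊓ bᶜ = a₂ ⊓ bᶜ ⊓ d ⊔ a₂ ⊓ bᶜ ⊓ dᶜ := split_b _ _
      rw [h]
      refine sup_le (le_sup_of_le_left (le_sup_of_le_left inf_le_right)) ?_
      refine le_sup_of_le_right ?_
      rw [inf_assoc, inf_comm bᶜ, ← inf_assoc, inf_assoc]
  · refine sup_le (sup_le ?_ ?_) ?_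
    · refine sup_le (le_sup_of_le_left le_sup_left) ?_
      have h : a₁ ⊓ a₂ = a₁ ⊓ a₂ ⊓ b ⊔ a₁ ⊓ a₂ ⊓ bᶜ := split_b _ _
      rw [h]
      refine sup_le ?_ ?_
      · exact le_sup_of_le_left (le_sup_of_le_right (inf_le_inf inf_le_left le_rfl))
      · exact le_sup_of_le_right (inf_le_inf inf_le_right le_rfl)
    · exact le_sup_of_le_left (le_sup_of_le_right (inf_le_inf inf_le_left le_rfl))
    · exact le_sup_of_le_right (inf_le_inf inf_le_left le_rfl)

theorem norm_disj₀₁ (a₀ a₁ a₂ : B) :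
    (a₀ ⊔ a₁ ⊓ a₂) ⊓ (a₁ ⊓ (a₀ ⊔ a₁ ⊓ a₂)ᶜ) = ⊥ := by
  refine le_bot_iff.mp ?_
  calc (a₀ ⊔ a₁ ⊓ a₂) ⊓ (a₁ ⊓ (a₀ ⊔ a₁ ⊓ a₂)ᶜ)
      ≤ (a₀ ⊔ a₁ ⊓ a₂) ⊓ (a₀ ⊔ a₁ ⊓ a₂)ᶜ :=
        inf_le_inf le_rfl inf_le_right
    _ = ⊥ := inf_compl_self _

theorem norm_disj₀₂ (a₀ a₁ a₂ : B) :
    (a₀ ⊔ a₁ ⊓ a₂) ⊓ (a₂ ⊓ (a₀ ⊔ a₁ ⊓ a₂)ᶜ) = ⊥ := by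
  refine le_bot_iff.mp ?_
  calc (a₀ ⊔ a₁ ⊓ a₂) ⊓ (a₂ ⊓ (a₀ ⊔ a₁ ⊓ a₂)ᶜ)
      ≤ (a₀ ⊔ a₁ ⊓ a₂) ⊓ (a₀ ⊔ a₁ ⊓ a₂)ᶜ :=
        inf_le_inf le_rfl inf_le_right
    _ = ⊥ := inf_compl_self _

theorem norm_disj₁₂ (a₀ a₁ a₂ : B) :
    (a₁ ⊓ (a₀ ⊔ a₁ ⊓ a₂)ᶜ) ⊓ (a₂ ⊓ (a₀ ⊔ a₁ ⊓ a₂)ᶜ) = ⊥ := by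
  refine le_bot_iff.mp ?_
  calc (a₁ ⊓ (a₀ ⊔ a₁ ⊓ a₂)ᶜ) ⊓ (a₂ ⊓ (a₀ ⊔ a₁ ⊓ a₂)ᶜ)
      ≤ (a₁ ⊓ a₂) ⊓ (a₀ ⊔ a₁ ⊓ a₂)ᶜ :=
        le_inf (inf_le_inf inf_le_left inf_le_left) (le_trans inf_le_left inf_le_right)
    _ ≤ (a₀ ⊔ a₁ ⊓ a₂) ⊓ (a₀ ⊔ a₁ ⊓ a₂)ᶜ := inf_le_inf le_sup_right le_rfl
    _ = ⊥ := inf_compl_self _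

theorem disj_of_le_bot {u v : B} (h : u ⊓ v ≤ ⊥) : Disjoint u v :=
  disjoint_iff.mpr (le_bot_iff.mp h)

/-- complement of a pairwise-disjoint representation -/
theorem compl_rep {a₀ a₁ a₂ : B} (b : B) (h01 : a₀ ⊓ a₁ = ⊥) (h02 : a₀ ⊓ a₂ = ⊥)
    (h12 : a₁ ⊓ a₂ = ⊥) :
    (a₀ ⊔ a₁ ⊓ b ⊔ a₂ ⊓ bᶜ)ᶜ = (a₀ ⊔ a₁ ⊔ a₂)ᶜ ⊔ a₂ ⊓ b ⊔ a₁ ⊓ bᶜ := by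
  set r := (a₀ ⊔ a₁ ⊔ a₂)ᶜ with hr
  have hra₀ : a₀ ⊓ r ≤ ⊥ := by
    calc a₀ ⊓ r ≤ (a₀ ⊔ a₁ ⊔ a₂) ⊓ r := inf_le_inf (le_sup_of_le_left le_sup_left) le_rfl
      _ = ⊥ := inf_compl_self _
  have hra₁ : a₁ ⊓ r ≤ ⊥ := by
    calc a₁ ⊓ r ≤ (a₀ ⊔ a₁ ⊔ a₂) ⊓ r := inf_le_inf (le_sup_of_le_left le_sup_right) le_rfl
      _ = ⊥ := inf_compl_self _
  have hra₂ : a₂ ⊓ r ≤ ⊥ := by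
    calc a₂ ⊓ r ≤ (a₀ ⊔ a₁ ⊔ a₂) ⊓ r := inf_le_inf le_sup_right le_rfl
      _ = ⊥ := inf_compl_self _
  refine IsCompl.compl_eq (IsCompl.of_eq ?_ ?_)
  · -- x ⊓ y = ⊥
    refine disjoint_iff.mp ?_
    have d1 : Disjoint a₀ r := disj_of_le_bot hra₀
    have d2 : Disjoint a₀ (a₂ ⊓ b) :=
      disj_of_le_bot (le_trans (inf_le_inf le_rfl inf_le_left) (le_of_eq h02))
    have d3 : Disjoint a₀ (a₁ ⊓ bᶜ) :=
      disj_of_le_bot (le_trans (inf_le_inf le_rfl inf_le_left) (le_of_eq h01))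
    have d4 : Disjoint (a₁ ⊓ b) r :=
      disj_of_le_bot (le_trans (inf_le_inf inf_le_left le_rfl) hra₁)
    have d5 : Disjoint (a₁ ⊓ b) (a₂ ⊓ b) := by
      refine disj_of_le_bot ?_
      calc a₁ ⊓ b ⊓ (a₂ ⊓ b) ≤ a₁ ⊓ a₂ :=
            le_inf (le_trans inf_le_left inf_le_left) (le_trans inf_le_right inf_le_left)
        _ = ⊥ := h12
    have d6 : Disjoint (a₁ ⊓ b) (a₁ ⊓ bᶜ) := by
      refine disj_of_le_bot ?_
      calc a₁ ⊓ b ⊓ (a₁ ⊓ bᶜ) ≤ b ⊓ bᶜ :=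
            le_inf (le_trans inf_le_left inf_le_right) (le_trans inf_le_right inf_le_right)
        _ = ⊥ := inf_compl_self _
    have d7 : Disjoint (a₂ ⊓ bᶜ) r :=
      disj_of_le_bot (le_trans (inf_le_inf inf_le_left le_rfl) hra₂)
    have d8 : Disjoint (a₂ ⊓ bᶜ) (a₂ ⊓ b) := by
      refine disj_of_le_bot ?_
      calc a₂ ⊓ bᶜ ⊓ (a₂ ⊓ b) ≤ bᶜ ⊓ b :=
            le_inf (le_trans inf_le_left inf_le_right) (le_trans inf_le_right inf_le_right)
        _ = ⊥ := compl_inf_self _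
    have d9 : Disjoint (a₂ ⊓ bᶜ) (a₁ ⊓ bᶜ) := by
      refine disj_of_le_bot ?_
      calc a₂ ⊓ bᶜ ⊓ (a₁ ⊓ bᶜ) ≤ a₁ ⊓ a₂ :=
            le_inf (le_trans inf_le_right inf_le_left) (le_trans inf_le_left inf_le_left)
        _ = ⊥ := h12
    simp only [disjoint_sup_left, disjoint_sup_right]
    tauto
  · -- x ⊔ y = ⊤
    refine le_antisymm le_top ?_
    have h : (⊤ : B) = (a₀ ⊔ a₁ ⊔ a₂) ⊔ r := (sup_compl_eq_top).symm
    rw [h]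
    refine sup_le (sup_le (sup_le ?_ ?_) ?_) ?_
    · exact le_sup_of_le_left (le_sup_of_le_left le_sup_left)
    · refine le_trans (le_of_eq (split_b a₁ b)) (sup_le ?_ ?_)
      · exact le_sup_of_le_left (le_sup_of_le_left (le_sup_of_le_right le_rfl))
      · exact le_sup_of_le_right le_sup_right
    · refine le_trans (le_of_eq (split_b a₂ b)) (sup_le ?_ ?_)
      · exact le_sup_of_le_right (le_sup_of_le_left le_sup_right)
      · exact le_sup_of_le_left le_sup_right
    · exact le_sup_of_le_right (le_sup_of_le_left le_sup_left)

end Stmt3Aux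

namespace Stmt3Aux
variable {B : Type*} [BooleanAlgebra B]

theorem inf_compl_disj (d v : B) : d ⊓ (v ⊓ dᶜ) = ⊥ := by
  rw [inf_comm v, ← inf_assoc, inf_compl_self, bot_inf_eq]

theorem sup_rep_merge (a₀ a₁ a₂ c₀ c₁ c₂ b : B) :
    (a₀ ⊔ a₁ ⊓ b ⊔ a₂ ⊓ bᶜ) ⊔ (c₀ ⊔ c₁ ⊓ b ⊔ c₂ ⊓ bᶜ) =
      (a₀ ⊔ c₀) ⊔ (a₁ ⊔ c₁) ⊓ b ⊔ (a₂ ⊔ c₂) ⊓ bᶜ := by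
  rw [inf_sup_right, inf_sup_right]
  ac_rfl

theorem e_rep (u t₁ t₂ b : B) :
    u ⊔ t₁ ⊓ b ⊔ t₂ ⊓ bᶜ =
      (u ⊔ t₁ ⊓ t₂ ⊓ uᶜ) ⊔ (t₁ ⊓ (u ⊔ t₁ ⊓ t₂ ⊓ uᶜ)ᶜ) ⊓ b ⊔
        (t₂ ⊓ (u ⊔ t₁ ⊓ t₂ ⊓ uᶜ)ᶜ) ⊓ bᶜ := by
  set e := u ⊔ t₁ ⊓ t₂ ⊓ uᶜ with he
  refine le_antisymm ?_ ?_
  · refine sup_le (sup_le ?_ ?_) ?_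
    · exact le_sup_of_le_left (le_sup_of_le_left le_sup_left)
    · refine le_trans (le_of_eq (split_b (t₁ ⊓ b) e)) (sup_le ?_ ?_)
      · exact le_sup_of_le_left (le_sup_of_le_left inf_le_right)
      · refine le_sup_of_le_left (le_sup_of_le_right ?_)
        rw [inf_assoc, inf_comm b, ← inf_assoc, inf_assoc]
    · refine le_trans (le_of_eq (split_b (t₂ ⊓ bᶜ) e)) (sup_le ?_ ?_)
      · exact le_sup_of_le_left (le_sup_of_le_left inf_le_right)
      · refine le_sup_of_le_right ?_
        rw [inf_assoc, inf_comm bᶜ, ← inf_assoc, inf_assoc]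
  · refine sup_le (sup_le ?_ ?_) ?_
    · refine sup_le (le_sup_of_le_left le_sup_left) ?_
      refine le_trans (le_of_eq (split_b (t₁ ⊓ t₂ ⊓ uᶜ) b)) (sup_le ?_ ?_)
      · refine le_sup_of_le_left (le_sup_of_le_right ?_)
        exact inf_le_inf (le_trans inf_le_left inf_le_left) le_rfl
      · refine le_sup_of_le_right ?_
        exact inf_le_inf (le_trans inf_le_left inf_le_right) le_rfl
    · exact le_sup_of_le_left (le_sup_of_le_right (inf_le_inf inf_le_left le_rfl))
    · exact le_sup_of_le_right (inf_le_inf inf_le_left le_rfl)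

theorem e_disj12 (u t₁ t₂ : B) :
    (t₁ ⊓ (u ⊔ t₁ ⊓ t₂ ⊓ uᶜ)ᶜ) ⊓ (t₂ ⊓ (u ⊔ t₁ ⊓ t₂ ⊓ uᶜ)ᶜ) = ⊥ := by
  set e := u ⊔ t₁ ⊓ t₂ ⊓ uᶜ with he
  refine le_bot_iff.mp ?_
  have h1 : (t₁ ⊓ eᶜ) ⊓ (t₂ ⊓ eᶜ) ≤ t₁ ⊓ t₂ ⊓ uᶜ := by
    refine le_inf (le_inf (le_trans inf_le_left inf_le_left)
      (le_trans inf_le_right inf_le_left)) ?_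
    refine le_trans (le_trans inf_le_left inf_le_right) ?_
    exact compl_le_compl le_sup_left
  have h2 : (t₁ ⊓ eᶜ) ⊓ (t₂ ⊓ eᶜ) ≤ eᶜ := le_trans inf_le_left inf_le_right
  calc (t₁ ⊓ eᶜ) ⊓ (t₂ ⊓ eᶜ) ≤ e ⊓ eᶜ := le_inf (le_trans h1 le_sup_right) h2
    _ = ⊥ := inf_compl_self _

theorem split_mid (v d : B) : v = v ⊓ dᶜ ⊔ v ⊓ d := by
  rw [← inf_sup_left, compl_sup_eq_top, inf_top_eq]

theorem sup_absorb_overlap (a c : B) : a ⊔ c ⊓ aᶜ = a ⊔ c := by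
  rw [sup_inf_left, sup_compl_eq_top, inf_top_eq]

end Stmt3Aux

namespace Stmt3Aux
variable {B : Type*} [BooleanAlgebra B] {A : Set B} {μ : B → ℝ}

theorem keyS (hbotA : ⊥ ∈ A) (hsupA : ∀ x ∈ A, ∀ y ∈ A, x ⊔ y ∈ A)
    (hinfA : ∀ x ∈ A, ∀ y ∈ A, x ⊓ y ∈ A) (hcomplA : ∀ x ∈ A, xᶜ ∈ A)
    (hrange : ∀ x ∈ A, 0 ≤ μ x ∧ μ x ≤ 1)
    (hadd : ∀ x ∈ A, ∀ y ∈ A, x ⊓ y = ⊥ → μ (x ⊔ y) = μ x + μ y)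
    {a₀ a₁ a₂ : B} (h0 : a₀ ∈ A) (h1 : a₁ ∈ A) (h2 : a₂ ∈ A)
    (h01 : a₀ ⊓ a₁ = ⊥) (h02 : a₀ ⊓ a₂ = ⊥) (h12 : a₁ ⊓ a₂ = ⊥) (b : B) :
    sSupBelow A μ (a₀ ⊔ a₁ ⊓ b ⊔ a₂ ⊓ bᶜ) =
      μ a₀ + sSupBelow A μ (a₁ ⊓ b) + sSupBelow A μ (a₂ ⊓ bᶜ) := by
  rw [sup_assoc]
  have hax : a₀ ⊓ (a₁ ⊓ b ⊔ a₂ ⊓ bᶜ) = ⊥ := by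
    refine le_bot_iff.mp ?_
    rw [inf_sup_left]
    refine sup_le ?_ ?_
    · exact le_trans (inf_le_inf le_rfl inf_le_left) (le_of_eq h01)
    · exact le_trans (inf_le_inf le_rfl inf_le_left) (le_of_eq h02)
  rw [s_addA hbotA hsupA hinfA hcomplA hrange hadd h0 hax,
    s_split hbotA hsupA hinfA hcomplA hrange hadd h1 h2 h12 b bᶜ, add_assoc]



theorem inf2_sup_bot {p₁ p₂ q₁ q₂ t : B} (h11 : p₁ ⊓ q₁ ⊓ t = ⊥) (h12 : p₁ ⊓ q₂ ⊓ t = ⊥)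
    (h21 : p₂ ⊓ q₁ ⊓ t = ⊥) (h22 : p₂ ⊓ q₂ ⊓ t = ⊥) :
    (p₁ ⊔ p₂) ⊓ (q₁ ⊔ q₂) ⊓ t = ⊥ := by
  refine le_bot_iff.mp ?_
  have e : (p₁ ⊔ p₂) ⊓ (q₁ ⊔ q₂) = p₁ ⊓ q₁ ⊔ p₁ ⊓ q₂ ⊔ (p₂ ⊓ q₁ ⊔ p₂ ⊓ q₂) := by
    rw [inf_sup_right, inf_sup_left, inf_sup_left]
  rw [e, inf_sup_right, inf_sup_right, inf_sup_right]
  exact sup_le (sup_le h11.le h12.le) (sup_le h21.le h22.le)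


end Stmt3Aux

open Stmt3Aux

/-- Measure extension by one element: a finitely additive strictly positive measure `μ`
on a (dense) subalgebra `A` of `B` extends to a finitely additive strictly positive
measure `μ'` on the subalgebra generated by `A ∪ {b}`, given by the formula
`μ'(a·εb) = ½(μ(a) + μ̃(a·εb) − μ̃(a·(−εb)))`. -/
theorem stmt3 {B : Type*} [BooleanAlgebra B] (A : Set B) (μ : B → ℝ) (b : B)
    (hbotA : ⊥ ∈ A) (htopA : ⊤ ∈ A)
    (hsupA : ∀ x ∈ A, ∀ y ∈ A, x ⊔ y ∈ A)
    (hinfA : ∀ x ∈ A, ∀ y ∈ A, x ⊓ y ∈ A)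
    (hcomplA : ∀ x ∈ A, xᶜ ∈ A)
    (hdense : ∀ c : B, c ≠ ⊥ → ∃ a ∈ A, a ≠ ⊥ ∧ a ≤ c)
    (hμbot : μ ⊥ = 0) (hμtop : μ ⊤ = 1)
    (hrange : ∀ x ∈ A, 0 ≤ μ x ∧ μ x ≤ 1)
    (hadd : ∀ x ∈ A, ∀ y ∈ A, x ⊓ y = ⊥ → μ (x ⊔ y) = μ x + μ y)
    (hpos : ∀ x ∈ A, x ≠ ⊥ → 0 < μ x) :
    ∃ μ' : B → ℝ,
      (∀ x ∈ A, μ' x = μ x) ∧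
      (∀ x ∈ genSet A b, ∀ y ∈ genSet A b, x ⊓ y = ⊥ → μ' (x ⊔ y) = μ' x + μ' y) ∧
      (∀ x ∈ genSet A b, x ≠ ⊥ → 0 < μ' x) ∧
      (∀ a ∈ A, μ' (a ⊓ b) =
        (μ a + sSupBelow A μ (a ⊓ b) - sSupBelow A μ (a ⊓ bᶜ)) / 2) ∧
      (∀ a ∈ A, μ' (a ⊓ bᶜ) =
        (μ a + sSupBelow A μ (a ⊓ bᶜ) - sSupBelow A μ (a ⊓ b)) / 2) ∧
      (∀ a₀ ∈ A, ∀ a₁ ∈ A, ∀ a₂ ∈ A,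
        a₀ ⊓ a₁ = ⊥ → a₀ ⊓ a₂ = ⊥ → a₁ ⊓ a₂ = ⊥ →
        μ' (a₀ ⊔ (a₁ ⊓ b) ⊔ (a₂ ⊓ bᶜ)) = μ a₀ + μ' (a₁ ⊓ b) + μ' (a₂ ⊓ bᶜ)) := by
  classical
  set μ' : B → ℝ := fun x => (sSupBelow A μ x + 1 - sSupBelow A μ xᶜ) / 2 with hμ'def
  have hμcompl : ∀ a ∈ A, μ aᶜ = 1 - μ a := by
    intro a ha
    have h := hadd a ha aᶜ (hcomplA a ha) (inf_compl_self a)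
    rw [sup_compl_eq_top, hμtop] at h
    linarith
  have hsA : ∀ a ∈ A, sSupBelow A μ a = μ a :=
    fun a ha => sA hbotA hinfA hcomplA hrange hadd ha
  have honA : ∀ a ∈ A, μ' a = μ a := by
    intro a ha
    simp only [hμ'def]
    rw [hsA a ha, hsA _ (hcomplA a ha), hμcompl a ha]
    ring
  have hmu'bot : μ' ⊥ = 0 := by
    simp only [hμ'def]
    rw [compl_bot, s_bot hbotA hμbot hrange, hsA ⊤ htopA, hμtop]
    ring
  have hkey : ∀ a₀ ∈ A, ∀ a₁ ∈ A, ∀ a₂ ∈ A, a₀ ⊓ a₁ = ⊥ → a₀ ⊓ a₂ = ⊥ → a₁ ⊓ a₂ = ⊥ →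
      sSupBelow A μ (a₀ ⊔ a₁ ⊓ b ⊔ a₂ ⊓ bᶜ) =
        μ a₀ + sSupBelow A μ (a₁ ⊓ b) + sSupBelow A μ (a₂ ⊓ bᶜ) :=
    fun a₀ h0 a₁ h1 a₂ h2 h01 h02 h12 =>
      keyS hbotA hsupA hinfA hcomplA hrange hadd h0 h1 h2 h01 h02 h12 b
  have hC4 : ∀ a ∈ A, μ' (a ⊓ b) =
      (μ a + sSupBelow A μ (a ⊓ b) - sSupBelow A μ (a ⊓ bᶜ)) / 2 := by
    intro a ha
    have hcompl : (a ⊓ b)ᶜ = aᶜ ⊔ a ⊓ bᶜ := by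
      rw [compl_inf, ← sup_absorb_overlap aᶜ bᶜ, compl_compl, inf_comm]
    have hax : aᶜ ⊓ (a ⊓ bᶜ) = ⊥ := by
      rw [← inf_assoc, compl_inf_self, bot_inf_eq]
    have h2 : sSupBelow A μ (aᶜ ⊔ a ⊓ bᶜ) = μ aᶜ + sSupBelow A μ (a ⊓ bᶜ) :=
      s_addA hbotA hsupA hinfA hcomplA hrange hadd (hcomplA a ha) hax
    simp only [hμ'def]
    rw [hcompl, h2, hμcompl a ha]
    ring
  have hC5 : ∀ a ∈ A, μ' (a ⊓ bᶜ) =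
      (μ a + sSupBelow A μ (a ⊓ bᶜ) - sSupBelow A μ (a ⊓ b)) / 2 := by
    intro a ha
    have hcompl : (a ⊓ bᶜ)ᶜ = aᶜ ⊔ a ⊓ b := by
      rw [compl_inf, compl_compl, ← sup_absorb_overlap aᶜ b, compl_compl, inf_comm]
    have hax : aᶜ ⊓ (a ⊓ b) = ⊥ := by
      rw [← inf_assoc, compl_inf_self, bot_inf_eq]
    have h2 : sSupBelow A μ (aᶜ ⊔ a ⊓ b) = μ aᶜ + sSupBelow A μ (a ⊓ b) :=
      s_addA hbotA hsupA hinfA hcomplA hrange hadd (hcomplA a ha) hax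
    simp only [hμ'def]
    rw [hcompl, h2, hμcompl a ha]
    ring
  have hC6 : ∀ a₀ ∈ A, ∀ a₁ ∈ A, ∀ a₂ ∈ A,
      a₀ ⊓ a₁ = ⊥ → a₀ ⊓ a₂ = ⊥ → a₁ ⊓ a₂ = ⊥ →
      μ' (a₀ ⊔ (a₁ ⊓ b) ⊔ (a₂ ⊓ bᶜ)) = μ a₀ + μ' (a₁ ⊓ b) + μ' (a₂ ⊓ bᶜ) := by
    intro a₀ h0 a₁ h1 a₂ h2 h01 h02 h12
    have hx : sSupBelow A μ (a₀ ⊔ a₁ ⊓ b ⊔ a₂ ⊓ bᶜ) =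
        μ a₀ + sSupBelow A μ (a₁ ⊓ b) + sSupBelow A μ (a₂ ⊓ bᶜ) :=
      hkey a₀ h0 a₁ h1 a₂ h2 h01 h02 h12
    have hcompl := compl_rep b h01 h02 h12
    have h012A : a₀ ⊔ a₁ ⊔ a₂ ∈ A := hsupA _ (hsupA _ h0 _ h1) _ h2
    have hrA : (a₀ ⊔ a₁ ⊔ a₂)ᶜ ∈ A := hcomplA _ h012A
    have hr2 : (a₀ ⊔ a₁ ⊔ a₂)ᶜ ⊓ a₂ = ⊥ := by
      refine le_bot_iff.mp ?_
      calc (a₀ ⊔ a₁ ⊔ a₂)ᶜ ⊓ a₂ ≤ (a₀ ⊔ a₁ ⊔ a₂)ᶜ ⊓ (a₀ ⊔ a₁ ⊔ a₂) :=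
            inf_le_inf le_rfl le_sup_right
        _ = ⊥ := compl_inf_self _
    have hr1 : (a₀ ⊔ a₁ ⊔ a₂)ᶜ ⊓ a₁ = ⊥ := by
      refine le_bot_iff.mp ?_
      calc (a₀ ⊔ a₁ ⊔ a₂)ᶜ ⊓ a₁ ≤ (a₀ ⊔ a₁ ⊔ a₂)ᶜ ⊓ (a₀ ⊔ a₁ ⊔ a₂) :=
            inf_le_inf le_rfl (le_sup_of_le_left le_sup_right)
        _ = ⊥ := compl_inf_self _
    have h21 : a₂ ⊓ a₁ = ⊥ := by rw [inf_comm]; exact h12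
    have hxc : sSupBelow A μ ((a₀ ⊔ a₁ ⊓ b ⊔ a₂ ⊓ bᶜ)ᶜ) =
        μ ((a₀ ⊔ a₁ ⊔ a₂)ᶜ) + sSupBelow A μ (a₂ ⊓ b) + sSupBelow A μ (a₁ ⊓ bᶜ) := by
      rw [hcompl]
      exact hkey _ hrA a₂ h2 a₁ h1 hr2 hr1 h21
    have h01' : (a₀ ⊔ a₁) ⊓ a₂ = ⊥ := by
      rw [inf_sup_right, h02, h12, sup_bot_eq]
    have hμ012 : μ (a₀ ⊔ a₁ ⊔ a₂) = μ a₀ + μ a₁ + μ a₂ := by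
      rw [hadd _ (hsupA _ h0 _ h1) _ h2 h01', hadd _ h0 _ h1 h01]
    have hμr : μ ((a₀ ⊔ a₁ ⊔ a₂)ᶜ) = 1 - (μ a₀ + μ a₁ + μ a₂) := by
      rw [hμcompl _ h012A, hμ012]
    rw [hC4 a₁ h1, hC5 a₂ h2]
    simp only [hμ'def]
    rw [hx, hxc, hμr]
    ring
  have hFadd : ∀ p ∈ A, ∀ q ∈ A, p ⊓ q = ⊥ →
      μ' ((p ⊔ q) ⊓ b) = μ' (p ⊓ b) + μ' (q ⊓ b) := by
    intro p hp q hq hpq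
    have h1 : sSupBelow A μ ((p ⊔ q) ⊓ b) = sSupBelow A μ (p ⊓ b) + sSupBelow A μ (q ⊓ b) := by
      rw [inf_sup_right]
      exact s_split hbotA hsupA hinfA hcomplA hrange hadd hp hq hpq b b
    have h2 : sSupBelow A μ ((p ⊔ q) ⊓ bᶜ) =
        sSupBelow A μ (p ⊓ bᶜ) + sSupBelow A μ (q ⊓ bᶜ) := by
      rw [inf_sup_right]
      exact s_split hbotA hsupA hinfA hcomplA hrange hadd hp hq hpq bᶜ bᶜ
    rw [hC4 _ (hsupA p hp q hq), hC4 p hp, hC4 q hq, h1, h2, hadd p hp q hq hpq]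
    ring
  have hGadd : ∀ p ∈ A, ∀ q ∈ A, p ⊓ q = ⊥ →
      μ' ((p ⊔ q) ⊓ bᶜ) = μ' (p ⊓ bᶜ) + μ' (q ⊓ bᶜ) := by
    intro p hp q hq hpq
    have h1 : sSupBelow A μ ((p ⊔ q) ⊓ b) = sSupBelow A μ (p ⊓ b) + sSupBelow A μ (q ⊓ b) := by
      rw [inf_sup_right]
      exact s_split hbotA hsupA hinfA hcomplA hrange hadd hp hq hpq b b
    have h2 : sSupBelow A μ ((p ⊔ q) ⊓ bᶜ) =
        sSupBelow A μ (p ⊓ bᶜ) + sSupBelow A μ (q ⊓ bᶜ) := by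
      rw [inf_sup_right]
      exact s_split hbotA hsupA hinfA hcomplA hrange hadd hp hq hpq bᶜ bᶜ
    rw [hC5 _ (hsupA p hp q hq), hC5 p hp, hC5 q hq, h1, h2, hadd p hp q hq hpq]
    ring
  have hFG : ∀ a ∈ A, μ' (a ⊓ b) + μ' (a ⊓ bᶜ) = μ a := by
    intro a ha
    rw [hC4 a ha, hC5 a ha]
    ring
  have hpq : ∀ a ∈ A, sSupBelow A μ (a ⊓ b) + sSupBelow A μ (a ⊓ bᶜ) ≤ μ a := by
    intro a ha
    have hd : (a ⊓ b) ⊓ (a ⊓ bᶜ) = ⊥ := by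
      refine le_bot_iff.mp ?_
      calc (a ⊓ b) ⊓ (a ⊓ bᶜ) ≤ b ⊓ bᶜ :=
            le_inf (le_trans inf_le_left inf_le_right) (le_trans inf_le_right inf_le_right)
        _ = ⊥ := inf_compl_self _
    have h := s_superadd hbotA hsupA hrange hadd hd
    rw [← split_b a b, hsA a ha] at h
    exact h
  have hFge : ∀ a ∈ A, sSupBelow A μ (a ⊓ b) ≤ μ' (a ⊓ b) := by
    intro a ha
    rw [hC4 a ha]
    have := hpq a ha
    linarith
  have hGge : ∀ a ∈ A, sSupBelow A μ (a ⊓ bᶜ) ≤ μ' (a ⊓ bᶜ) := by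
    intro a ha
    rw [hC5 a ha]
    have := hpq a ha
    linarith
  have hsnn : ∀ x : B, 0 ≤ sSupBelow A μ x := s_nonneg hbotA hμbot hrange
  have hnorm : ∀ x ∈ genSet A b, ∃ a₀ a₁ a₂ : B, a₀ ∈ A ∧ a₁ ∈ A ∧ a₂ ∈ A ∧
      a₀ ⊓ a₁ = ⊥ ∧ a₀ ⊓ a₂ = ⊥ ∧ a₁ ⊓ a₂ = ⊥ ∧ x = a₀ ⊔ a₁ ⊓ b ⊔ a₂ ⊓ bᶜ := by
    rintro x ⟨a₀, h0, a₁, h1, a₂, h2, rfl⟩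
    have hdA : a₀ ⊔ a₁ ⊓ a₂ ∈ A := hsupA _ h0 _ (hinfA _ h1 _ h2)
    refine ⟨a₀ ⊔ a₁ ⊓ a₂, a₁ ⊓ (a₀ ⊔ a₁ ⊓ a₂)ᶜ, a₂ ⊓ (a₀ ⊔ a₁ ⊓ a₂)ᶜ,
      hdA, hinfA _ h1 _ (hcomplA _ hdA), hinfA _ h2 _ (hcomplA _ hdA),
      norm_disj₀₁ a₀ a₁ a₂, norm_disj₀₂ a₀ a₁ a₂, norm_disj₁₂ a₀ a₁ a₂, norm_rep a₀ a₁ a₂ b⟩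
  have hC3 : ∀ x ∈ genSet A b, x ≠ ⊥ → 0 < μ' x := by
    intro x hx hxne
    obtain ⟨a₀, a₁, a₂, h0, h1, h2, h01, h02, h12, hrep⟩ := hnorm x hx
    rw [hrep] at hxne ⊢
    rw [hC6 a₀ h0 a₁ h1 a₂ h2 h01 h02 h12]
    have hF1 := hFge a₁ h1
    have hG2 := hGge a₂ h2
    have hs1 := hsnn (a₁ ⊓ b)
    have hs2 := hsnn (a₂ ⊓ bᶜ)
    have h0nn := (hrange a₀ h0).1
    by_cases hb0 : a₀ = ⊥
    · by_cases hb1 : a₁ ⊓ b = ⊥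
      · have hb2 : a₂ ⊓ bᶜ ≠ ⊥ := by
          intro hb2
          apply hxne
          rw [hb0, hb1, hb2, sup_bot_eq, sup_bot_eq]
        have := s_pos hdense hrange hpos hb2
        linarith
      · have := s_pos hdense hrange hpos hb1
        linarith
    · have := hpos a₀ h0 hb0
      linarith
  have hC2 : ∀ x ∈ genSet A b, ∀ y ∈ genSet A b, x ⊓ y = ⊥ →
      μ' (x ⊔ y) = μ' x + μ' y := by
    intro x hx y hy hxy
    obtain ⟨a₀, a₁, a₂, ha0, ha1, ha2, ha01, ha02, ha12, hxr⟩ := hnorm x hx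
    obtain ⟨c₀, c₁, c₂, hc0, hc1, hc2, hc01, hc02, hc12, hyr⟩ := hnorm y hy
    subst hxr
    subst hyr
    have hcross : ∀ u v : B, u ≤ a₀ ⊔ a₁ ⊓ b ⊔ a₂ ⊓ bᶜ → v ≤ c₀ ⊔ c₁ ⊓ b ⊔ c₂ ⊓ bᶜ →
        u ⊓ v = ⊥ := by
      intro u v hu hv
      refine le_bot_iff.mp ?_
      calc u ⊓ v ≤ (a₀ ⊔ a₁ ⊓ b ⊔ a₂ ⊓ bᶜ) ⊓ (c₀ ⊔ c₁ ⊓ b ⊔ c₂ ⊓ bᶜ) := inf_le_inf hu hv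
        _ = ⊥ := hxy
    -- basic disjointness facts
    have d00 : a₀ ⊓ c₀ = ⊥ :=
      hcross a₀ c₀ (le_sup_of_le_left le_sup_left) (le_sup_of_le_left le_sup_left)
    have d11 : c₁ ⊓ a₁ ⊓ b = ⊥ := by
      refine le_bot_iff.mp ?_
      have h := hcross (a₁ ⊓ b) (c₁ ⊓ b) (le_sup_of_le_left le_sup_right)
        (le_sup_of_le_left le_sup_right)
      calc c₁ ⊓ a₁ ⊓ b ≤ (a₁ ⊓ b) ⊓ (c₁ ⊓ b) :=
            le_inf (le_inf (le_trans inf_le_left inf_le_right) inf_le_right)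
              (le_inf (le_trans inf_le_left inf_le_left) inf_le_right)
        _ = ⊥ := h
    have d22 : c₂ ⊓ a₂ ⊓ bᶜ = ⊥ := by
      refine le_bot_iff.mp ?_
      have h := hcross (a₂ ⊓ bᶜ) (c₂ ⊓ bᶜ) le_sup_right le_sup_right
      calc c₂ ⊓ a₂ ⊓ bᶜ ≤ (a₂ ⊓ bᶜ) ⊓ (c₂ ⊓ bᶜ) :=
            le_inf (le_inf (le_trans inf_le_left inf_le_right) inf_le_right)
              (le_inf (le_trans inf_le_left inf_le_left) inf_le_right)
        _ = ⊥ := h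
    have hA1g : (a₁ ⊔ c₁) ⊓ (a₀ ⊔ c₀) ⊓ b = ⊥ := by
      refine inf2_sup_bot ?_ ?_ ?_ ?_
      · refine le_bot_iff.mp ?_
        calc a₁ ⊓ a₀ ⊓ b ≤ a₀ ⊓ a₁ :=
              le_inf (le_trans inf_le_left inf_le_right) (le_trans inf_le_left inf_le_left)
          _ = ⊥ := ha01
      · refine le_bot_iff.mp ?_
        have h := hcross (a₁ ⊓ b) c₀ (le_sup_of_le_left le_sup_right)
          (le_sup_of_le_left le_sup_left)
        calc a₁ ⊓ c₀ ⊓ b ≤ (a₁ ⊓ b) ⊓ c₀ :=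
              le_inf (le_inf (le_trans inf_le_left inf_le_left) inf_le_right)
                (le_trans inf_le_left inf_le_right)
          _ = ⊥ := h
      · refine le_bot_iff.mp ?_
        have h := hcross a₀ (c₁ ⊓ b) (le_sup_of_le_left le_sup_left)
          (le_sup_of_le_left le_sup_right)
        calc c₁ ⊓ a₀ ⊓ b ≤ a₀ ⊓ (c₁ ⊓ b) :=
              le_inf (le_trans inf_le_left inf_le_right)
                (le_inf (le_trans inf_le_left inf_le_left) inf_le_right)
          _ = ⊥ := h
      · refine le_bot_iff.mp ?_
        calc c₁ ⊓ c₀ ⊓ b ≤ c₀ ⊓ c₁ :=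
              le_inf (le_trans inf_le_left inf_le_right) (le_trans inf_le_left inf_le_left)
          _ = ⊥ := hc01
    have hA2g : (a₂ ⊔ c₂) ⊓ (a₀ ⊔ c₀) ⊓ bᶜ = ⊥ := by
      refine inf2_sup_bot ?_ ?_ ?_ ?_
      · refine le_bot_iff.mp ?_
        calc a₂ ⊓ a₀ ⊓ bᶜ ≤ a₀ ⊓ a₂ :=
              le_inf (le_trans inf_le_left inf_le_right) (le_trans inf_le_left inf_le_left)
          _ = ⊥ := ha02
      · refine le_bot_iff.mp ?_
        have h := hcross (a₂ ⊓ bᶜ) c₀ le_sup_right (le_sup_of_le_left le_sup_left)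
        calc a₂ ⊓ c₀ ⊓ bᶜ ≤ (a₂ ⊓ bᶜ) ⊓ c₀ :=
              le_inf (le_inf (le_trans inf_le_left inf_le_left) inf_le_right)
                (le_trans inf_le_left inf_le_right)
          _ = ⊥ := h
      · refine le_bot_iff.mp ?_
        have h := hcross a₀ (c₂ ⊓ bᶜ) (le_sup_of_le_left le_sup_left) le_sup_right
        calc c₂ ⊓ a₀ ⊓ bᶜ ≤ a₀ ⊓ (c₂ ⊓ bᶜ) :=
              le_inf (le_trans inf_le_left inf_le_right)
                (le_inf (le_trans inf_le_left inf_le_left) inf_le_right)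
          _ = ⊥ := h
      · refine le_bot_iff.mp ?_
        calc c₂ ⊓ c₀ ⊓ bᶜ ≤ c₀ ⊓ c₂ :=
              le_inf (le_trans inf_le_left inf_le_right) (le_trans inf_le_left inf_le_left)
          _ = ⊥ := hc02
    -- memberships
    have hA1A : a₁ ⊔ c₁ ∈ A := hsupA _ ha1 _ hc1
    have hA2A : a₂ ⊔ c₂ ∈ A := hsupA _ ha2 _ hc2
    have hGA : a₀ ⊔ c₀ ∈ A := hsupA _ ha0 _ hc0
    have hWA : (a₁ ⊔ c₁) ⊓ (a₂ ⊔ c₂) ⊓ (a₀ ⊔ c₀)ᶜ ∈ A :=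
      hinfA _ (hinfA _ hA1A _ hA2A) _ (hcomplA _ hGA)
    have hEA : (a₀ ⊔ c₀) ⊔ (a₁ ⊔ c₁) ⊓ (a₂ ⊔ c₂) ⊓ (a₀ ⊔ c₀)ᶜ ∈ A := hsupA _ hGA _ hWA
    have he1A : (a₁ ⊔ c₁) ⊓ ((a₀ ⊔ c₀) ⊔ (a₁ ⊔ c₁) ⊓ (a₂ ⊔ c₂) ⊓ (a₀ ⊔ c₀)ᶜ)ᶜ ∈ A :=
      hinfA _ hA1A _ (hcomplA _ hEA)
    have he2A : (a₂ ⊔ c₂) ⊓ ((a₀ ⊔ c₀) ⊔ (a₁ ⊔ c₁) ⊓ (a₂ ⊔ c₂) ⊓ (a₀ ⊔ c₀)ᶜ)ᶜ ∈ A :=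
      hinfA _ hA2A _ (hcomplA _ hEA)
    -- abbreviate: W and E
    have hxyrep : (a₀ ⊔ a₁ ⊓ b ⊔ a₂ ⊓ bᶜ) ⊔ (c₀ ⊔ c₁ ⊓ b ⊔ c₂ ⊓ bᶜ) =
        ((a₀ ⊔ c₀) ⊔ (a₁ ⊔ c₁) ⊓ (a₂ ⊔ c₂) ⊓ (a₀ ⊔ c₀)ᶜ) ⊔
          ((a₁ ⊔ c₁) ⊓ ((a₀ ⊔ c₀) ⊔ (a₁ ⊔ c₁) ⊓ (a₂ ⊔ c₂) ⊓ (a₀ ⊔ c₀)ᶜ)ᶜ) ⊓ b ⊔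
          ((a₂ ⊔ c₂) ⊓ ((a₀ ⊔ c₀) ⊔ (a₁ ⊔ c₁) ⊓ (a₂ ⊔ c₂) ⊓ (a₀ ⊔ c₀)ᶜ)ᶜ) ⊓ bᶜ := by
      rw [sup_rep_merge]
      exact e_rep (a₀ ⊔ c₀) (a₁ ⊔ c₁) (a₂ ⊔ c₂) b
    have dE1 : ((a₀ ⊔ c₀) ⊔ (a₁ ⊔ c₁) ⊓ (a₂ ⊔ c₂) ⊓ (a₀ ⊔ c₀)ᶜ) ⊓
        ((a₁ ⊔ c₁) ⊓ ((a₀ ⊔ c₀) ⊔ (a₁ ⊔ c₁) ⊓ (a₂ ⊔ c₂) ⊓ (a₀ ⊔ c₀)ᶜ)ᶜ) = ⊥ :=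
      inf_compl_disj _ _
    have dE2 : ((a₀ ⊔ c₀) ⊔ (a₁ ⊔ c₁) ⊓ (a₂ ⊔ c₂) ⊓ (a₀ ⊔ c₀)ᶜ) ⊓
        ((a₂ ⊔ c₂) ⊓ ((a₀ ⊔ c₀) ⊔ (a₁ ⊔ c₁) ⊓ (a₂ ⊔ c₂) ⊓ (a₀ ⊔ c₀)ᶜ)ᶜ) = ⊥ :=
      inf_compl_disj _ _
    have d12 := e_disj12 (a₀ ⊔ c₀) (a₁ ⊔ c₁) (a₂ ⊔ c₂)
    have q2 := hC6 _ hEA _ he1A _ he2A dE1 dE2 d12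
    have q3 := hC6 a₀ ha0 a₁ ha1 a₂ ha2 ha01 ha02 ha12
    have q4 := hC6 c₀ hc0 c₁ hc1 c₂ hc2 hc01 hc02 hc12
    have q5 : μ ((a₀ ⊔ c₀) ⊔ (a₁ ⊔ c₁) ⊓ (a₂ ⊔ c₂) ⊓ (a₀ ⊔ c₀)ᶜ) =
        μ (a₀ ⊔ c₀) + μ ((a₁ ⊔ c₁) ⊓ (a₂ ⊔ c₂) ⊓ (a₀ ⊔ c₀)ᶜ) :=
      hadd _ hGA _ hWA (inf_compl_disj _ _)
    have q6 : μ (a₀ ⊔ c₀) = μ a₀ + μ c₀ := hadd _ ha0 _ hc0 d00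
    -- q7 : additivity of μ'(· ⊓ b) over a₁, c₁
    have hc1a1c : c₁ ⊓ a₁ᶜ ∈ A := hinfA _ hc1 _ (hcomplA _ ha1)
    have hc1a1 : c₁ ⊓ a₁ ∈ A := hinfA _ hc1 _ ha1
    have s1 : μ' (c₁ ⊓ b) = μ' ((c₁ ⊓ a₁ᶜ) ⊓ b) + μ' ((c₁ ⊓ a₁) ⊓ b) := by
      have hd : (c₁ ⊓ a₁ᶜ) ⊓ (c₁ ⊓ a₁) = ⊥ := by
        refine le_bot_iff.mp ?_
        calc (c₁ ⊓ a₁ᶜ) ⊓ (c₁ ⊓ a₁) ≤ a₁ᶜ ⊓ a₁ :=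
              le_inf (le_trans inf_le_left inf_le_right) (le_trans inf_le_right inf_le_right)
          _ = ⊥ := compl_inf_self _
      have h := hFadd _ hc1a1c _ hc1a1 hd
      rw [← split_mid c₁ a₁] at h
      exact h
    have s2 : μ' ((c₁ ⊓ a₁) ⊓ b) = 0 := by rw [d11]; exact hmu'bot
    have s3 : μ' ((a₁ ⊔ c₁) ⊓ b) = μ' (a₁ ⊓ b) + μ' ((c₁ ⊓ a₁ᶜ) ⊓ b) := by
      have h := hFadd _ ha1 _ hc1a1c (inf_compl_disj a₁ c₁)
      rw [sup_absorb_overlap a₁ c₁] at h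
      exact h
    have q7 : μ' ((a₁ ⊔ c₁) ⊓ b) = μ' (a₁ ⊓ b) + μ' (c₁ ⊓ b) := by
      rw [s3, s1, s2]; ring
    -- q8 : additivity of μ'(· ⊓ bᶜ) over a₂, c₂
    have hc2a2c : c₂ ⊓ a₂ᶜ ∈ A := hinfA _ hc2 _ (hcomplA _ ha2)
    have hc2a2 : c₂ ⊓ a₂ ∈ A := hinfA _ hc2 _ ha2
    have t1 : μ' (c₂ ⊓ bᶜ) = μ' ((c₂ ⊓ a₂ᶜ) ⊓ bᶜ) + μ' ((c₂ ⊓ a₂) ⊓ bᶜ) := by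
      have hd : (c₂ ⊓ a₂ᶜ) ⊓ (c₂ ⊓ a₂) = ⊥ := by
        refine le_bot_iff.mp ?_
        calc (c₂ ⊓ a₂ᶜ) ⊓ (c₂ ⊓ a₂) ≤ a₂ᶜ ⊓ a₂ :=
              le_inf (le_trans inf_le_left inf_le_right) (le_trans inf_le_right inf_le_right)
          _ = ⊥ := compl_inf_self _
      have h := hGadd _ hc2a2c _ hc2a2 hd
      rw [← split_mid c₂ a₂] at h
      exact h
    have t2 : μ' ((c₂ ⊓ a₂) ⊓ bᶜ) = 0 := by rw [d22]; exact hmu'bot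
    have t3 : μ' ((a₂ ⊔ c₂) ⊓ bᶜ) = μ' (a₂ ⊓ bᶜ) + μ' ((c₂ ⊓ a₂ᶜ) ⊓ bᶜ) := by
      have h := hGadd _ ha2 _ hc2a2c (inf_compl_disj a₂ c₂)
      rw [sup_absorb_overlap a₂ c₂] at h
      exact h
    have q8 : μ' ((a₂ ⊔ c₂) ⊓ bᶜ) = μ' (a₂ ⊓ bᶜ) + μ' (c₂ ⊓ bᶜ) := by
      rw [t3, t1, t2]; ring
    -- q9/q10/q11 : splitting μ'((a₁ ⊔ c₁) ⊓ b) along E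
    have hA1EA : (a₁ ⊔ c₁) ⊓ ((a₀ ⊔ c₀) ⊔ (a₁ ⊔ c₁) ⊓ (a₂ ⊔ c₂) ⊓ (a₀ ⊔ c₀)ᶜ) ∈ A :=
      hinfA _ hA1A _ hEA
    have q9 : μ' ((a₁ ⊔ c₁) ⊓ b) =
        μ' (((a₁ ⊔ c₁) ⊓ ((a₀ ⊔ c₀) ⊔ (a₁ ⊔ c₁) ⊓ (a₂ ⊔ c₂) ⊓ (a₀ ⊔ c₀)ᶜ)ᶜ) ⊓ b) +
          μ' (((a₁ ⊔ c₁) ⊓ ((a₀ ⊔ c₀) ⊔ (a₁ ⊔ c₁) ⊓ (a₂ ⊔ c₂) ⊓ (a₀ ⊔ c₀)ᶜ)) ⊓ b) := by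
      have hd : ((a₁ ⊔ c₁) ⊓ ((a₀ ⊔ c₀) ⊔ (a₁ ⊔ c₁) ⊓ (a₂ ⊔ c₂) ⊓ (a₀ ⊔ c₀)ᶜ)ᶜ) ⊓
          ((a₁ ⊔ c₁) ⊓ ((a₀ ⊔ c₀) ⊔ (a₁ ⊔ c₁) ⊓ (a₂ ⊔ c₂) ⊓ (a₀ ⊔ c₀)ᶜ)) = ⊥ := by
        refine le_bot_iff.mp ?_
        calc _ ≤ ((a₀ ⊔ c₀) ⊔ (a₁ ⊔ c₁) ⊓ (a₂ ⊔ c₂) ⊓ (a₀ ⊔ c₀)ᶜ)ᶜ ⊓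
              ((a₀ ⊔ c₀) ⊔ (a₁ ⊔ c₁) ⊓ (a₂ ⊔ c₂) ⊓ (a₀ ⊔ c₀)ᶜ) :=
              le_inf (le_trans inf_le_left inf_le_right) (le_trans inf_le_right inf_le_right)
          _ = ⊥ := compl_inf_self _
      have h := hFadd _ he1A _ hA1EA hd
      rw [← split_mid (a₁ ⊔ c₁) ((a₀ ⊔ c₀) ⊔ (a₁ ⊔ c₁) ⊓ (a₂ ⊔ c₂) ⊓ (a₀ ⊔ c₀)ᶜ)] at h
      exact h
    have hA1GA : (a₁ ⊔ c₁) ⊓ (a₀ ⊔ c₀) ∈ A := hinfA _ hA1A _ hGA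
    have q10 : μ' (((a₁ ⊔ c₁) ⊓ ((a₀ ⊔ c₀) ⊔ (a₁ ⊔ c₁) ⊓ (a₂ ⊔ c₂) ⊓ (a₀ ⊔ c₀)ᶜ)) ⊓ b) =
        μ' (((a₁ ⊔ c₁) ⊓ (a₀ ⊔ c₀)) ⊓ b) +
          μ' (((a₁ ⊔ c₁) ⊓ (a₂ ⊔ c₂) ⊓ (a₀ ⊔ c₀)ᶜ) ⊓ b) := by
      have hWle : (a₁ ⊔ c₁) ⊓ (a₂ ⊔ c₂) ⊓ (a₀ ⊔ c₀)ᶜ ≤ a₁ ⊔ c₁ :=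
        le_trans inf_le_left inf_le_left
      have hid : (a₁ ⊔ c₁) ⊓ ((a₀ ⊔ c₀) ⊔ (a₁ ⊔ c₁) ⊓ (a₂ ⊔ c₂) ⊓ (a₀ ⊔ c₀)ᶜ) =
          (a₁ ⊔ c₁) ⊓ (a₀ ⊔ c₀) ⊔ (a₁ ⊔ c₁) ⊓ (a₂ ⊔ c₂) ⊓ (a₀ ⊔ c₀)ᶜ := by
        rw [inf_sup_left, inf_eq_right.mpr hWle]
      have hd : ((a₁ ⊔ c₁) ⊓ (a₀ ⊔ c₀)) ⊓ ((a₁ ⊔ c₁) ⊓ (a₂ ⊔ c₂) ⊓ (a₀ ⊔ c₀)ᶜ) = ⊥ := by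
        refine le_bot_iff.mp ?_
        calc _ ≤ (a₀ ⊔ c₀) ⊓ ((a₁ ⊔ c₁) ⊓ (a₂ ⊔ c₂) ⊓ (a₀ ⊔ c₀)ᶜ) :=
              inf_le_inf inf_le_right le_rfl
          _ = ⊥ := inf_compl_disj _ _
      have h := hFadd _ hA1GA _ hWA hd
      rw [← hid] at h
      exact h
    have q11 : μ' (((a₁ ⊔ c₁) ⊓ (a₀ ⊔ c₀)) ⊓ b) = 0 := by rw [hA1g]; exact hmu'bot
    -- q12/q13/q14 : splitting μ'((a₂ ⊔ c₂) ⊓ bᶜ) along E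
    have hA2EA : (a₂ ⊔ c₂) ⊓ ((a₀ ⊔ c₀) ⊔ (a₁ ⊔ c₁) ⊓ (a₂ ⊔ c₂) ⊓ (a₀ ⊔ c₀)ᶜ) ∈ A :=
      hinfA _ hA2A _ hEA
    have q12 : μ' ((a₂ ⊔ c₂) ⊓ bᶜ) =
        μ' (((a₂ ⊔ c₂) ⊓ ((a₀ ⊔ c₀) ⊔ (a₁ ⊔ c₁) ⊓ (a₂ ⊔ c₂) ⊓ (a₀ ⊔ c₀)ᶜ)ᶜ) ⊓ bᶜ) +
          μ' (((a₂ ⊔ c₂) ⊓ ((a₀ ⊔ c₀) ⊔ (a₁ ⊔ c₁) ⊓ (a₂ ⊔ c₂) ⊓ (a₀ ⊔ c₀)ᶜ)) ⊓ bᶜ) := by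
      have hd : ((a₂ ⊔ c₂) ⊓ ((a₀ ⊔ c₀) ⊔ (a₁ ⊔ c₁) ⊓ (a₂ ⊔ c₂) ⊓ (a₀ ⊔ c₀)ᶜ)ᶜ) ⊓
          ((a₂ ⊔ c₂) ⊓ ((a₀ ⊔ c₀) ⊔ (a₁ ⊔ c₁) ⊓ (a₂ ⊔ c₂) ⊓ (a₀ ⊔ c₀)ᶜ)) = ⊥ := by
        refine le_bot_iff.mp ?_
        calc _ ≤ ((a₀ ⊔ c₀) ⊔ (a₁ ⊔ c₁) ⊓ (a₂ ⊔ c₂) ⊓ (a₀ ⊔ c₀)ᶜ)ᶜ ⊓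
              ((a₀ ⊔ c₀) ⊔ (a₁ ⊔ c₁) ⊓ (a₂ ⊔ c₂) ⊓ (a₀ ⊔ c₀)ᶜ) :=
              le_inf (le_trans inf_le_left inf_le_right) (le_trans inf_le_right inf_le_right)
          _ = ⊥ := compl_inf_self _
      have h := hGadd _ he2A _ hA2EA hd
      rw [← split_mid (a₂ ⊔ c₂) ((a₀ ⊔ c₀) ⊔ (a₁ ⊔ c₁) ⊓ (a₂ ⊔ c₂) ⊓ (a₀ ⊔ c₀)ᶜ)] at h
      exact h
    have hA2GA : (a₂ ⊔ c₂) ⊓ (a₀ ⊔ c₀) ∈ A := hinfA _ hA2A _ hGA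
    have q13 : μ' (((a₂ ⊔ c₂) ⊓ ((a₀ ⊔ c₀) ⊔ (a₁ ⊔ c₁) ⊓ (a₂ ⊔ c₂) ⊓ (a₀ ⊔ c₀)ᶜ)) ⊓ bᶜ) =
        μ' (((a₂ ⊔ c₂) ⊓ (a₀ ⊔ c₀)) ⊓ bᶜ) +
          μ' (((a₁ ⊔ c₁) ⊓ (a₂ ⊔ c₂) ⊓ (a₀ ⊔ c₀)ᶜ) ⊓ bᶜ) := by
      have hWle : (a₁ ⊔ c₁) ⊓ (a₂ ⊔ c₂) ⊓ (a₀ ⊔ c₀)ᶜ ≤ a₂ ⊔ c₂ :=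
        le_trans inf_le_left inf_le_right
      have hid : (a₂ ⊔ c₂) ⊓ ((a₀ ⊔ c₀) ⊔ (a₁ ⊔ c₁) ⊓ (a₂ ⊔ c₂) ⊓ (a₀ ⊔ c₀)ᶜ) =
          (a₂ ⊔ c₂) ⊓ (a₀ ⊔ c₀) ⊔ (a₁ ⊔ c₁) ⊓ (a₂ ⊔ c₂) ⊓ (a₀ ⊔ c₀)ᶜ := by
        rw [inf_sup_left, inf_eq_right.mpr hWle]
      have hd : ((a₂ ⊔ c₂) ⊓ (a₀ ⊔ c₀)) ⊓ ((a₁ ⊔ c₁) ⊓ (a₂ ⊔ c₂) ⊓ (a₀ ⊔ c₀)ᶜ) = ⊥ := by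
        refine le_bot_iff.mp ?_
        calc _ ≤ (a₀ ⊔ c₀) ⊓ ((a₁ ⊔ c₁) ⊓ (a₂ ⊔ c₂) ⊓ (a₀ ⊔ c₀)ᶜ) :=
              inf_le_inf inf_le_right le_rfl
          _ = ⊥ := inf_compl_disj _ _
      have h := hGadd _ hA2GA _ hWA hd
      rw [← hid] at h
      exact h
    have q14 : μ' (((a₂ ⊔ c₂) ⊓ (a₀ ⊔ c₀)) ⊓ bᶜ) = 0 := by rw [hA2g]; exact hmu'bot
    have q15 : μ' (((a₁ ⊔ c₁) ⊓ (a₂ ⊔ c₂) ⊓ (a₀ ⊔ c₀)ᶜ) ⊓ b) +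
        μ' (((a₁ ⊔ c₁) ⊓ (a₂ ⊔ c₂) ⊓ (a₀ ⊔ c₀)ᶜ) ⊓ bᶜ) =
        μ ((a₁ ⊔ c₁) ⊓ (a₂ ⊔ c₂) ⊓ (a₀ ⊔ c₀)ᶜ) := hFG _ hWA
    rw [hxyrep, q2, q3, q4]
    linarith [q5, q6, q7, q8, q9, q10, q11, q12, q13, q14, q15]
  exact ⟨μ', honA, hC2, hC3, hC4, hC5, hC6⟩
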